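/- Let θ' be the smallest attained similarity value strictly greater than θ (so join(θ) \ join(θ') = join⁼(θ)). If for every pair (r,s) ∈ join⁼(θ) we have r ∉ top^R(s) or s ∉ top^S(r), then the number of non-trivial connected components of the bipartite graph G_θ = (R, S, join(θ)) is at most the number of non-trivial connected components of G_{θ'}; i.e., h_c(θ') ≥ h_c(θ). -/

import Mathlib

open scoped Classical

noncomputable def simJoin {α β : Type*} (R : Finset α) (S : Finset β)
    (sim : α → β → ℝ) (θ : ℝ) : Finset (α × β) :=
  (R ×ˢ S).filter fun p => θ ≤ sim p.1 p.2

noncomputable def simJoinEq {α β : Type*} (R : Finset α) (S : Finset β)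
    (sim : α → β → ℝ) (θ : ℝ) : Finset (α × β) :=
  (R ×ˢ S).filter fun p => sim p.1 p.2 = θ

noncomputable def topS {α β : Type*} (S : Finset β) (sim : α → β → ℝ) (r : α) : Finset β :=
  S.filter fun s => ∀ s' ∈ S, sim r s' ≤ sim r s

noncomputable def topR {α β : Type*} (R : Finset α) (sim : α → β → ℝ) (s : β) : Finset α :=
  R.filter fun r => ∀ r' ∈ R, sim r' s ≤ sim r s

/-- The bipartite graph `G_θ` on vertex set `α ⊕ β` whose edges are the joined pairs. -/
def biGraph {α β : Type*} (R : Finset α) (S : Finset β)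
    (sim : α → β → ℝ) (θ : ℝ) : SimpleGraph (α ⊕ β) :=
  SimpleGraph.fromRel fun x y =>
    ∃ r ∈ R, ∃ s ∈ S, θ ≤ sim r s ∧ x = Sum.inl r ∧ y = Sum.inr s

/-- `h_c(θ)`: the number of non-trivial connected components of `G_θ`,
i.e. components containing at least one edge. -/
noncomputable def hc {α β : Type*} (R : Finset α) (S : Finset β)
    (sim : α → β → ℝ) (θ : ℝ) : ℕ :=
  {c : (biGraph R S sim θ).ConnectedComponent |
    ∃ r ∈ R, ∃ s ∈ S, θ ≤ sim r s ∧
      (biGraph R S sim θ).connectedComponentMk (Sum.inl r) = c}.ncard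

theorem maxgroups_pivotal {α β : Type*} (R : Finset α) (S : Finset β)
    (sim : α → β → ℝ) (θ θ' : ℝ) (hlt : θ < θ')
    (hnext : ∀ r ∈ R, ∀ s ∈ S, θ ≤ sim r s → sim r s = θ ∨ θ' ≤ sim r s)
    (htop : ∀ r ∈ R, ∀ s ∈ S, sim r s = θ →
      r ∉ topR R sim s ∨ s ∉ topS S sim r) :
    hc R S sim θ ≤ hc R S sim θ' := by
  classical
  -- the subgraph relation
  have hmono : biGraph R S sim θ' ≤ biGraph R S sim θ := by
    intro x y hxy
    simp only [biGraph, SimpleGraph.fromRel_adj] at hxy ⊢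
    obtain ⟨hne, h⟩ := hxy
    refine ⟨hne, ?_⟩
    rcases h with ⟨r, hr, s, hs, h1, h2⟩ | ⟨r, hr, s, hs, h1, h2⟩
    · exact Or.inl ⟨r, hr, s, hs, le_trans hlt.le h1, h2⟩
    · exact Or.inr ⟨r, hr, s, hs, le_trans hlt.le h1, h2⟩
  set g := SimpleGraph.ConnectedComponent.map (SimpleGraph.Hom.ofLE hmono) with hg
  set A := {c : (biGraph R S sim θ).ConnectedComponent |
    ∃ r ∈ R, ∃ s ∈ S, θ ≤ sim r s ∧
      (biGraph R S sim θ).connectedComponentMk (Sum.inl r) = c} with hA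
  set B := {c : (biGraph R S sim θ').ConnectedComponent |
    ∃ r ∈ R, ∃ s ∈ S, θ' ≤ sim r s ∧
      (biGraph R S sim θ').connectedComponentMk (Sum.inl r) = c} with hB
  have hBfin : B.Finite := by
    apply Set.Finite.subset (Set.Finite.image
      (f := fun r => (biGraph R S sim θ').connectedComponentMk (Sum.inl r)) R.finite_toSet)
    rintro c ⟨r, hr, s, hs, _, rfl⟩
    exact ⟨r, hr, rfl⟩
  -- any edge of G_θ joins components
  have hadj : ∀ r ∈ R, ∀ s ∈ S, θ ≤ sim r s →
      (biGraph R S sim θ).Adj (Sum.inl r) (Sum.inr s) := by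
    intro r hr s hs h
    simp only [biGraph, SimpleGraph.fromRel_adj]
    exact ⟨by simp, Or.inl ⟨r, hr, s, hs, h, rfl, rfl⟩⟩
  have hsub : A ⊆ g '' B := by
    rintro c ⟨r, hr, s, hs, hθ, rfl⟩
    -- find a θ'-edge (r₀, s₀) with mk (inl r₀) = mk (inl r)
    have key : ∃ r₀ ∈ R, ∃ s₀ ∈ S, θ' ≤ sim r₀ s₀ ∧
        (biGraph R S sim θ).connectedComponentMk (Sum.inl r₀)
          = (biGraph R S sim θ).connectedComponentMk (Sum.inl r) := by
      rcases hnext r hr s hs hθ with heq | hge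
      · rcases htop r hr s hs heq with h | h
        · -- ∃ r' with sim r' s > θ
          rw [topR, Finset.mem_filter] at h
          push_neg at h
          obtain ⟨r', hr', hgt⟩ := h hr
          have hgt' : θ < sim r' s := heq ▸ hgt
          rcases hnext r' hr' s hs hgt'.le with h' | h'
          · exact absurd h' (ne_of_gt hgt')
          · refine ⟨r', hr', s, hs, h', ?_⟩
            exact SimpleGraph.ConnectedComponent.sound
              ((hadj r' hr' s hs hgt'.le).reachable.trans
                (hadj r hr s hs hθ).reachable.symm)
        · rw [topS, Finset.mem_filter] at h
          push_neg at h
          obtain ⟨s', hs', hgt⟩ := h hs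
          have hgt' : θ < sim r s' := heq ▸ hgt
          rcases hnext r hr s' hs' hgt'.le with h' | h'
          · exact absurd h' (ne_of_gt hgt')
          · exact ⟨r, hr, s', hs', h', rfl⟩
      · exact ⟨r, hr, s, hs, hge, rfl⟩
    obtain ⟨r₀, hr₀, s₀, hs₀, hθ', hmk⟩ := key
    refine ⟨(biGraph R S sim θ').connectedComponentMk (Sum.inl r₀),
      ⟨r₀, hr₀, s₀, hs₀, hθ', rfl⟩, ?_⟩
    rw [hg, SimpleGraph.ConnectedComponent.map_mk]
    exact hmk
  calc A.ncard ≤ (g '' B).ncard := Set.ncard_le_ncard hsub (hBfin.image g)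
    _ ≤ B.ncard := Set.ncard_image_le hBfin
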